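/- For all n ≥ 0 and all real x, y, ρ, q: P_n(x|y,ρ,q) = ∑_{i=0}^n [n choose i]_q ρ^{n-i} B_{n-i}(y|q) H_i(x|q), where P_n are the Al-Salam–Chihara polynomials, H_i the continuous q-Hermite polynomials, and B_m the auxiliary polynomials. -/
import Mathlib


noncomputable def qint (q : ℝ) (n : ℕ) : ℝ := ∑ i ∈ Finset.range n, q ^ i

noncomputable def qfact (q : ℝ) (n : ℕ) : ℝ := ∏ i ∈ Finset.range n, qint q (i + 1)

noncomputable def qPoch (a q : ℝ) (n : ℕ) : ℝ := ∏ i ∈ Finset.range n, (1 - a * q ^ i)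

/-- Gaussian binomial coefficient as a polynomial in `q`, via the Pascal-type recurrence. -/
noncomputable def qbinom (q : ℝ) : ℕ → ℕ → ℝ
  | _, 0 => 1
  | 0, _ + 1 => 0
  | n + 1, k + 1 => qbinom q n k + q ^ (k + 1) * qbinom q n (k + 1)

/-- Rescaled continuous q-Hermite polynomials `H_n(x|q)`. -/
noncomputable def qHermite (q x : ℝ) : ℕ → ℝ
  | 0 => 1
  | 1 => x
  | n + 2 => x * qHermite q x (n + 1) - qint q (n + 1) * qHermite q x n

/-- Chebyshev polynomials of the second kind. -/
noncomputable def Ucheb (x : ℝ) : ℕ → ℝ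
  | 0 => 1
  | 1 => 2 * x
  | n + 2 => 2 * x * Ucheb x (n + 1) - Ucheb x n

/-- Probabilist's Hermite polynomials. -/
noncomputable def He (x : ℝ) : ℕ → ℝ
  | 0 => 1
  | 1 => x
  | n + 2 => x * He x (n + 1) - (n + 1 : ℝ) * He x n

/-- Big q-Hermite polynomials `H_n(x|a,q)`. -/
noncomputable def bigH (q a x : ℝ) (n : ℕ) : ℝ :=
  ∑ i ∈ Finset.range (n + 1),
    qbinom q n i * q ^ (i.choose 2) * (-a) ^ i * qHermite q x (n - i)

/-- Al-Salam--Chihara polynomials `P_n(x|y,ρ,q)`. -/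
noncomputable def ASC (q x y ρ : ℝ) : ℕ → ℝ
  | 0 => 1
  | 1 => x - ρ * y
  | n + 2 =>
      (x - ρ * y * q ^ (n + 1)) * ASC q x y ρ (n + 1)
        - qint q (n + 1) * (1 - ρ ^ 2 * q ^ n) * ASC q x y ρ n

/-- Auxiliary polynomials `B_n(x|q)`. -/
noncomputable def Bpoly (q x : ℝ) : ℕ → ℝ
  | 0 => 1
  | 1 => -x
  | n + 2 => -q ^ (n + 1) * x * Bpoly q x (n + 1) + q ^ n * qint q (n + 1) * Bpoly q x n

lemma aux_qint_zero (q : ℝ) : qint q 0 = 0 := by simp [qint]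
lemma aux_qint_add (q : ℝ) (a b : ℕ) : qint q (a + b) = qint q a + q ^ a * qint q b := by
  simp [qint, Finset.sum_range_add, pow_add, Finset.mul_sum]

lemma aux_qbinom_zero (q : ℝ) (n : ℕ) : qbinom q n 0 = 1 := by cases n <;> rfl
lemma aux_qbinom_succ (q : ℝ) (n k : ℕ) :
    qbinom q (n+1) (k+1) = qbinom q n k + q ^ (k + 1) * qbinom q n (k + 1) := by rw [qbinom]

lemma aux_qbinom_of_lt (q : ℝ) : ∀ n k, n < k → qbinom q n k = 0
  | 0, _+1, _ => rfl
  | n+1, k+1, h => by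
    rw [aux_qbinom_succ, aux_qbinom_of_lt q n k (by omega),
      aux_qbinom_of_lt q n (k+1) (by omega)]; ring

lemma aux_qbinom_self (q : ℝ) : ∀ n, qbinom q n n = 1
  | 0 => rfl
  | n+1 => by
    rw [aux_qbinom_succ, aux_qbinom_self q n, aux_qbinom_of_lt q n (n+1) (by omega)]; ring

lemma aux_H (q x : ℝ) : ∀ i, x * qHermite q x i
    = qHermite q x (i+1) + qint q i * qHermite q x (i-1)
  | 0 => by simp [qHermite, aux_qint_zero]
  | 1 => by rw [show (1:ℕ)+1 = 2 from rfl]; rw [qHermite, qHermite]; simp [qHermite]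
  | i+2 => by rw [show i+2+1 = (i+1)+2 from rfl]; rw [qHermite]; simp [qHermite]

lemma aux_B_succ (q y : ℝ) (k : ℕ) : Bpoly q y (k+2)
    = -q ^ (k + 1) * y * Bpoly q y (k + 1) + q ^ k * qint q (k + 1) * Bpoly q y k := by
  rw [Bpoly]

lemma aux_AB (q : ℝ) (m : ℕ) :
    (∀ j, qint q (j+1) * qbinom q (m+1) (j+1) = qint q (m+1) * qbinom q m j) ∧
    (∀ j, qint q (m+1-j) * qbinom q (m+1) j = qint q (m+1) * qbinom q m j) := by
  induction m with
  | zero =>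
    constructor
    · intro j
      match j with
      | 0 => simp [aux_qbinom_self, aux_qbinom_zero]
      | j+1 =>
        rw [aux_qbinom_of_lt q 1 (j+2) (by omega), aux_qbinom_of_lt q 0 (j+1) (by omega)]
        ring
    · intro j
      match j with
      | 0 => simp [aux_qbinom_zero]
      | 1 => simp [aux_qint_zero, aux_qbinom_of_lt q 0 1 (by omega)]
      | j+2 =>
        rw [show (1:ℕ) - (j+2) = 0 from by omega, aux_qint_zero,
          aux_qbinom_of_lt q 0 (j+2) (by omega)]
        ring
  | succ m ih =>
    obtain ⟨ihA, ihB⟩ := ih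
    have hq2 : ∀ j, j ≤ m+1 → qint q (m+2) = qint q (j+1) + q ^ (j+1) * qint q (m+1-j) := by
      intro j hj
      have h := aux_qint_add q (j+1) (m+1-j)
      rw [show (j+1) + (m+1-j) = m+2 from by omega] at h
      exact h
    constructor
    · intro j
      by_cases hj : j ≤ m + 1
      · rw [aux_qbinom_succ, hq2 j hj]
        linear_combination q ^ (j+1) * ihA j - q ^ (j+1) * ihB j
      · rw [aux_qbinom_of_lt q (m+2) (j+1) (by omega),
          aux_qbinom_of_lt q (m+1) j (by omega)]
        ring
    · intro j
      match j with
      | 0 => simp [aux_qbinom_zero]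
      | j+1 =>
        by_cases hj : j ≤ m + 1
        · rw [show m+2-(j+1) = m+1-j from by omega, aux_qbinom_succ q (m+1) j, hq2 j hj]
          linear_combination ihB j - ihA j
        · rw [aux_qbinom_of_lt q (m+2) (j+1) (by omega),
            aux_qbinom_of_lt q (m+1) (j+1) (by omega)]
          ring

lemma aux_key (q y ρ : ℝ) (m i : ℕ) (hi : i ≤ m + 1) :
    q ^ i * qbinom q (m+1) i * ρ ^ (m+2-i) * Bpoly q y (m+2-i)
      = qint q (i+1) * qbinom q (m+1) (i+1) * ρ ^ (m-i) * Bpoly q y (m-i)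
        - ρ * y * q ^ (m+1) * (qbinom q (m+1) i * ρ ^ (m+1-i) * Bpoly q y (m+1-i))
        - qint q (m+1) * (1 - ρ^2 * q^m) * (qbinom q m i * ρ ^ (m-i) * Bpoly q y (m-i)) := by
  rcases Nat.lt_or_ge i (m+1) with h | h
  · obtain ⟨k, hk⟩ : ∃ k, m = i + k := ⟨m - i, by omega⟩
    subst hk
    rw [show i+k+2-i = k+2 from by omega, show i+k+1-i = k+1 from by omega,
      show i+k-i = k from by omega]
    have hA := (aux_AB q (i+k)).1 i
    have hB := (aux_AB q (i+k)).2 i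
    rw [show i+k+1-i = k+1 from by omega] at hB
    rw [aux_B_succ]
    linear_combination (q ^ (i+k) * ρ ^ (k+2) * Bpoly q y k) * hB - (ρ ^ k * Bpoly q y k) * hA
  · have hieq : i = m + 1 := by omega
    subst hieq
    rw [show m+2-(m+1) = 1 from by omega, show m+1-(m+1) = 0 from by omega,
      show m-(m+1) = 0 from by omega,
      aux_qbinom_self, aux_qbinom_of_lt q (m+1) (m+2) (by omega),
      aux_qbinom_of_lt q m (m+1) (by omega),
      show Bpoly q y 1 = -y from rfl, show Bpoly q y 0 = 1 from rfl]
    ring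

lemma aux_step (q x y ρ : ℝ) (m : ℕ)
    (h1 : ASC q x y ρ m = ∑ i ∈ Finset.range (m+1),
        qbinom q m i * ρ ^ (m-i) * Bpoly q y (m-i) * qHermite q x i)
    (h2 : ASC q x y ρ (m+1) = ∑ i ∈ Finset.range (m+2),
        qbinom q (m+1) i * ρ ^ (m+1-i) * Bpoly q y (m+1-i) * qHermite q x i) :
    ASC q x y ρ (m+2) = ∑ i ∈ Finset.range (m+3),
        qbinom q (m+2) i * ρ ^ (m+2-i) * Bpoly q y (m+2-i) * qHermite q x i := by
  have hrec : ASC q x y ρ (m+2)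
      = (x - ρ * y * q ^ (m + 1)) * ASC q x y ρ (m + 1)
        - qint q (m + 1) * (1 - ρ ^ 2 * q ^ m) * ASC q x y ρ m := by rw [ASC]
  rw [hrec, h1, h2]
  have hLHS : ∑ i ∈ Finset.range (m+3),
        qbinom q (m+2) i * ρ ^ (m+2-i) * Bpoly q y (m+2-i) * qHermite q x i
      = (∑ i ∈ Finset.range (m+2),
          qbinom q (m+1) i * ρ ^ (m+1-i) * Bpoly q y (m+1-i) * qHermite q x (i+1))
        + ∑ i ∈ Finset.range (m+2),
          (q ^ i * qbinom q (m+1) i * ρ ^ (m+2-i) * Bpoly q y (m+2-i)) * qHermite q x i := by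
    rw [Finset.sum_range_succ']
    have step1 : ∀ i ∈ Finset.range (m+2),
        qbinom q (m+2) (i+1) * ρ ^ (m+2-(i+1)) * Bpoly q y (m+2-(i+1)) * qHermite q x (i+1)
        = qbinom q (m+1) i * ρ ^ (m+1-i) * Bpoly q y (m+1-i) * qHermite q x (i+1)
          + (q ^ (i+1) * qbinom q (m+1) (i+1) * ρ ^ (m+1-i) * Bpoly q y (m+1-i))
            * qHermite q x (i+1) := by
      intro i _
      rw [show m+2-(i+1) = m+1-i from by omega, aux_qbinom_succ]
      ring
    rw [Finset.sum_congr rfl step1, Finset.sum_add_distrib]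
    have step2 : ∑ i ∈ Finset.range (m+2),
        (q ^ (i+1) * qbinom q (m+1) (i+1) * ρ ^ (m+1-i) * Bpoly q y (m+1-i))
          * qHermite q x (i+1)
        = ∑ i ∈ Finset.range (m+1),
        (q ^ (i+1) * qbinom q (m+1) (i+1) * ρ ^ (m+1-i) * Bpoly q y (m+1-i))
          * qHermite q x (i+1) := by
      rw [Finset.sum_range_succ, aux_qbinom_of_lt q (m+1) (m+2) (by omega)]
      ring
    have step3 : ∑ i ∈ Finset.range (m+2),
        (q ^ i * qbinom q (m+1) i * ρ ^ (m+2-i) * Bpoly q y (m+2-i)) * qHermite q x i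
        = ∑ i ∈ Finset.range (m+1),
          (q ^ (i+1) * qbinom q (m+1) (i+1) * ρ ^ (m+1-i) * Bpoly q y (m+1-i))
            * qHermite q x (i+1)
          + (q ^ 0 * qbinom q (m+1) 0 * ρ ^ (m+2) * Bpoly q y (m+2)) * qHermite q x 0 := by
      rw [Finset.sum_range_succ']
      congr 1
      apply Finset.sum_congr rfl
      intro i _
      rw [show m+2-(i+1) = m+1-i from by omega]
    rw [step2, step3, aux_qbinom_zero, aux_qbinom_zero]
    simp only [Nat.sub_zero]
    ring
  rw [hLHS]
  have hx : x * (∑ i ∈ Finset.range (m+2),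
        qbinom q (m+1) i * ρ ^ (m+1-i) * Bpoly q y (m+1-i) * qHermite q x i)
      = (∑ i ∈ Finset.range (m+2),
          qbinom q (m+1) i * ρ ^ (m+1-i) * Bpoly q y (m+1-i) * qHermite q x (i+1))
        + ∑ i ∈ Finset.range (m+2),
          (qint q i * (qbinom q (m+1) i * ρ ^ (m+1-i) * Bpoly q y (m+1-i)))
            * qHermite q x (i-1) := by
    rw [Finset.mul_sum, ← Finset.sum_add_distrib]
    apply Finset.sum_congr rfl
    intro i _
    linear_combination (qbinom q (m+1) i * ρ ^ (m+1-i) * Bpoly q y (m+1-i)) * aux_H q x i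
  have hT2 : ∑ i ∈ Finset.range (m+2),
        (qint q i * (qbinom q (m+1) i * ρ ^ (m+1-i) * Bpoly q y (m+1-i)))
          * qHermite q x (i-1)
      = ∑ i ∈ Finset.range (m+2),
        (qint q (i+1) * (qbinom q (m+1) (i+1) * ρ ^ (m-i) * Bpoly q y (m-i)))
          * qHermite q x i := by
    rw [Finset.sum_range_succ']
    conv_rhs => rw [Finset.sum_range_succ]
    rw [aux_qint_zero, aux_qbinom_of_lt q (m+1) (m+2) (by omega)]
    have : ∀ i ∈ Finset.range (m+1),
        (qint q (i+1) * (qbinom q (m+1) (i+1) * ρ ^ (m+1-(i+1)) * Bpoly q y (m+1-(i+1))))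
          * qHermite q x (i+1-1)
        = (qint q (i+1) * (qbinom q (m+1) (i+1) * ρ ^ (m-i) * Bpoly q y (m-i)))
          * qHermite q x i := by
      intro i _
      rw [show m+1-(i+1) = m-i from by omega, show i+1-1 = i from rfl]
    rw [Finset.sum_congr rfl this]
    ring
  have ha : ρ * y * q ^ (m+1) * (∑ i ∈ Finset.range (m+2),
        qbinom q (m+1) i * ρ ^ (m+1-i) * Bpoly q y (m+1-i) * qHermite q x i)
      = ∑ i ∈ Finset.range (m+2),
        (ρ * y * q ^ (m+1) * (qbinom q (m+1) i * ρ ^ (m+1-i) * Bpoly q y (m+1-i)))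
          * qHermite q x i := by
    rw [Finset.mul_sum]
    apply Finset.sum_congr rfl
    intro i _
    ring
  have hb : qint q (m+1) * (1 - ρ^2 * q^m) * (∑ i ∈ Finset.range (m+1),
        qbinom q m i * ρ ^ (m-i) * Bpoly q y (m-i) * qHermite q x i)
      = ∑ i ∈ Finset.range (m+2),
        (qint q (m+1) * (1 - ρ^2 * q^m) * (qbinom q m i * ρ ^ (m-i) * Bpoly q y (m-i)))
          * qHermite q x i := by
    conv_rhs => rw [Finset.sum_range_succ]
    rw [aux_qbinom_of_lt q m (m+1) (by omega), Finset.mul_sum]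
    have : ∀ i ∈ Finset.range (m+1),
        qint q (m+1) * (1 - ρ^2 * q^m)
            * (qbinom q m i * ρ ^ (m-i) * Bpoly q y (m-i) * qHermite q x i)
        = (qint q (m+1) * (1 - ρ^2 * q^m) * (qbinom q m i * ρ ^ (m-i) * Bpoly q y (m-i)))
          * qHermite q x i := by
      intro i _
      ring
    rw [Finset.sum_congr rfl this]
    ring
  rw [sub_mul, hx, hT2, ha, hb]
  have hsub : ∑ i ∈ Finset.range (m+2),
        (q ^ i * qbinom q (m+1) i * ρ ^ (m+2-i) * Bpoly q y (m+2-i)) * qHermite q x i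
      = ∑ i ∈ Finset.range (m+2),
        ((qint q (i+1) * (qbinom q (m+1) (i+1) * ρ ^ (m-i) * Bpoly q y (m-i)))
            * qHermite q x i
          - (ρ * y * q ^ (m+1) * (qbinom q (m+1) i * ρ ^ (m+1-i) * Bpoly q y (m+1-i)))
            * qHermite q x i
          - (qint q (m+1) * (1 - ρ^2 * q^m) * (qbinom q m i * ρ ^ (m-i) * Bpoly q y (m-i)))
            * qHermite q x i) := by
    apply Finset.sum_congr rfl
    intro i hi
    have hi' : i ≤ m + 1 := by
      have := Finset.mem_range.mp hi; omega
    linear_combination (qHermite q x i) * aux_key q y ρ m i hi'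
  rw [hsub, Finset.sum_sub_distrib, Finset.sum_sub_distrib]
  ring

theorem ASC_eq_sum_B_H (q x y ρ : ℝ) (n : ℕ) :
    ASC q x y ρ n =
      ∑ i ∈ Finset.range (n + 1),
        qbinom q n i * ρ ^ (n - i) * Bpoly q y (n - i) * qHermite q x i := by
  have key : ∀ k, (ASC q x y ρ k = ∑ i ∈ Finset.range (k + 1),
        qbinom q k i * ρ ^ (k - i) * Bpoly q y (k - i) * qHermite q x i)
      ∧ (ASC q x y ρ (k+1) = ∑ i ∈ Finset.range (k + 2),
        qbinom q (k+1) i * ρ ^ (k+1 - i) * Bpoly q y (k+1 - i) * qHermite q x i) := by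
    intro k
    induction k with
    | zero =>
      constructor
      · simp [ASC, qbinom, Bpoly, qHermite]
      · rw [show ASC q x y ρ 1 = x - ρ * y from rfl, Finset.sum_range_succ,
          Finset.sum_range_one]
        norm_num [aux_qbinom_zero, aux_qbinom_self]
        rw [show Bpoly q y 1 = -y from rfl, show Bpoly q y 0 = 1 from rfl,
          show qHermite q x 0 = 1 from rfl, show qHermite q x 1 = x from rfl]
        ring
    | succ k ih =>
      exact ⟨ih.2, aux_step q x y ρ k ih.1 ih.2⟩
  exact (key n).1
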